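/- Let B_1,…,B_d ∈ 𝔸 be invertible elements such that each B_k² is a nonzero real multiple of 1 and such that for all k, l either B_k B_l = B_l B_k or B_k B_l = −B_l B_k. Then for every A ∈ 𝔸 and every multi-index j ∈ {0,1}^d the two iterated decompositions coincide: A_{c^j(→B)} = A_{c^j(←B)}. -/

import Mathlib

noncomputable section

variable {𝔸 : Type*}

/-- The commutative (`s = 0`) and anticommutative (`s = 1`) part of `A` with respect to an
invertible element `B`: `A_{c^s(B)} = ½(A + (−1)^s B⁻¹AB)`. -/
def cPart [Ring 𝔸] [Algebra ℝ 𝔸] (B : 𝔸) (s : Fin 2) (A : 𝔸) : 𝔸 :=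
  (2 : ℝ)⁻¹ • (A + (-1 : 𝔸) ^ (s : ℕ) * (Ring.inverse B * A * B))

/-- The forward iterated decomposition `A_{c^j(→B)}`, applying the first list entry first. -/
def cFwd [Ring 𝔸] [Algebra ℝ 𝔸] (L : List (𝔸 × Fin 2)) (A : 𝔸) : 𝔸 :=
  L.foldl (fun acc p => cPart p.1 p.2 acc) A

/-- The backward iterated decomposition `A_{c^j(←B)}`, applying the last list entry first. -/
def cBwd [Ring 𝔸] [Algebra ℝ 𝔸] (L : List (𝔸 × Fin 2)) (A : 𝔸) : 𝔸 :=
  L.foldr (fun p acc => cPart p.1 p.2 acc) A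

section aux
variable [Ring 𝔸] [Algebra ℝ 𝔸]

lemma tau_comm (B C : 𝔸) (hB : IsUnit B) (hC : IsUnit C)
    (h : B * C = C * B ∨ B * C = -(C * B)) (X : 𝔸) :
    Ring.inverse B * (Ring.inverse C * X * C) * B
      = Ring.inverse C * (Ring.inverse B * X * B) * C := by
  set b := Ring.inverse B with hb
  set c := Ring.inverse C with hc
  have hbB : b * B = 1 := Ring.inverse_mul_cancel B hB
  have hBb : B * b = 1 := Ring.mul_inverse_cancel B hB
  have hcC : c * C = 1 := Ring.inverse_mul_cancel C hC
  have hCc : C * c = 1 := Ring.mul_inverse_cancel C hC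
  rcases h with h | h
  · -- commuting case
    have h1 : C * b = b * C := by
      have := congrArg (fun x => b * x * b) h
      simp only [← mul_assoc, hbB, one_mul] at this
      simp only [mul_assoc, hBb, mul_one] at this
      simpa using this
    have h2 : b * c = c * b := by
      have := congrArg (fun x => c * x * c) h1
      simp only [← mul_assoc, hcC, one_mul] at this
      simp only [mul_assoc, hCc, mul_one] at this
      simpa [← mul_assoc] using this
    have hCB : C * B = B * C := h.symm
    calc b * (c * X * C) * B = (b * c) * X * (C * B) := by noncomm_ring
      _ = (c * b) * X * (B * C) := by rw [h2, hCB]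
      _ = c * (b * X * B) * C := by noncomm_ring
  · -- anticommuting case
    have h1 : C * b = -(b * C) := by
      have := congrArg (fun x => b * x * b) h
      simp only [mul_neg, neg_mul, ← mul_assoc, hbB, one_mul] at this
      simp only [mul_assoc, hBb, mul_one] at this
      simpa using this
    have h2 : b * c = -(c * b) := by
      have := congrArg (fun x => c * x * c) h1
      simp only [mul_neg, neg_mul, ← mul_assoc, hcC, one_mul] at this
      simp only [mul_assoc, hCc, mul_one] at this
      simpa [← mul_assoc] using this
    have hCB : C * B = -(B * C) := by rw [h, neg_neg]
    calc b * (c * X * C) * B = (b * c) * X * (C * B) := by noncomm_ring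
      _ = (-(c * b)) * X * (-(B * C)) := by rw [h2, hCB]
      _ = c * (b * X * B) * C := by noncomm_ring

lemma cPart_cPart_comm (B C : 𝔸) (hB : IsUnit B) (hC : IsUnit C)
    (h : B * C = C * B ∨ B * C = -(C * B)) (s t : Fin 2) (A : 𝔸) :
    cPart B s (cPart C t A) = cPart C t (cPart B s A) := by
  have key : Ring.inverse B * Ring.inverse C * A * C * B
      = Ring.inverse C * Ring.inverse B * A * B * C := by
    simpa only [← mul_assoc] using tau_comm B C hB hC h A
  fin_cases s <;> fin_cases t <;>
    simp only [cPart, Fin.isValue, Fin.val_zero, Fin.val_one, pow_zero, pow_one, one_mul,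
      neg_mul, mul_neg, neg_neg, smul_add, mul_add, add_mul, mul_smul_comm, smul_mul_assoc,
      mul_one, mul_assoc, ← mul_assoc] <;>
    rw [key] <;> module

lemma cFwd_cons (p : 𝔸 × Fin 2) (L : List (𝔸 × Fin 2)) (A : 𝔸) :
    cFwd (p :: L) A = cFwd L (cPart p.1 p.2 A) := rfl

lemma cBwd_cons (p : 𝔸 × Fin 2) (L : List (𝔸 × Fin 2)) (A : 𝔸) :
    cBwd (p :: L) A = cPart p.1 p.2 (cBwd L A) := rfl

lemma cFwd_pull (p : 𝔸 × Fin 2) (L : List (𝔸 × Fin 2))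
    (hU : ∀ q ∈ L, IsUnit q.1) (hUp : IsUnit p.1)
    (hco : ∀ q ∈ L, p.1 * q.1 = q.1 * p.1 ∨ p.1 * q.1 = -(q.1 * p.1)) (A : 𝔸) :
    cFwd L (cPart p.1 p.2 A) = cPart p.1 p.2 (cFwd L A) := by
  induction L generalizing A with
  | nil => rfl
  | cons q L ih =>
    rw [cFwd_cons, cFwd_cons,
      cPart_cPart_comm q.1 p.1 (hU q (by simp)) hUp
        (by rcases hco q (by simp) with h | h
            · exact Or.inl h.symm
            · exact Or.inr (by rw [h]; simp)) q.2 p.2 A,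
      ih (fun r hr => hU r (by simp [hr])) (fun r hr => hco r (by simp [hr]))]

lemma cFwd_eq_cBwd_gen (L : List (𝔸 × Fin 2))
    (hU : ∀ p ∈ L, IsUnit p.1)
    (hco : ∀ p ∈ L, ∀ q ∈ L, p.1 * q.1 = q.1 * p.1 ∨ p.1 * q.1 = -(q.1 * p.1)) (A : 𝔸) :
    cFwd L A = cBwd L A := by
  induction L generalizing A with
  | nil => rfl
  | cons p L ih =>
    rw [cFwd_cons, cBwd_cons,
      cFwd_pull p L (fun r hr => hU r (by simp [hr])) (hU p (by simp))
        (fun r hr => hco p (by simp) r (by simp [hr])) A,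
      ih (fun r hr => hU r (by simp [hr]))
        (fun r hr s hs => hco r (by simp [hr]) s (by simp [hs]))]

end aux

/-- For invertible elements `B₁,…,B_d` with real square and mutually coorthogonal
(`B_k B_l = ±B_l B_k`), the forward and backward iterated decompositions coincide:
`A_{c^j(→B)} = A_{c^j(←B)}`. -/
theorem cFwd_eq_cBwd [Ring 𝔸] [Algebra ℝ 𝔸]
    {d : ℕ} (B : Fin d → 𝔸) (hU : ∀ k, IsUnit (B k))
    (hsq : ∀ k, ∃ r : ℝ, r ≠ 0 ∧ B k ^ 2 = r • (1 : 𝔸))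
    (hco : ∀ k l, B k * B l = B l * B k ∨ B k * B l = -(B l * B k))
    (A : 𝔸) (j : Fin d → Fin 2) :
    cFwd (List.ofFn (fun l => (B l, j l))) A =
      cBwd (List.ofFn (fun l => (B l, j l))) A := by
  apply cFwd_eq_cBwd_gen
  · intro p hp
    obtain ⟨k, rfl⟩ := List.mem_ofFn.1 hp
    exact hU k
  · intro p hp q hq
    obtain ⟨k, rfl⟩ := List.mem_ofFn.1 hp
    obtain ⟨l, rfl⟩ := List.mem_ofFn.1 hq
    exact hco k l
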